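/- Let M and N be objects of an abelian category 𝒜. Then N is dual strongly M-CS-Rickart and M is N-𝒯-nonsingular if and only if N is dual strongly M-Rickart. -/

import Mathlib

open CategoryTheory CategoryTheory.Limits

universe w v u

variable {C : Type u} [Category.{v} C] [Abelian C]

/-- A morphism is a section if it is a split monomorphism. -/
def IsSection {K M : C} (s : K ⟶ M) : Prop := ∃ p : M ⟶ K, s ≫ p = 𝟙 K

/-- A morphism is a retraction if it is a split epimorphism. -/
def IsRetraction {M P : C} (r : M ⟶ P) : Prop := ∃ s : P ⟶ M, s ≫ r = 𝟙 P

/-- An essential monomorphism: a mono `e` such that any `h` with `e ≫ h` mono is mono. -/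
def EssentialMono {K L : C} (e : K ⟶ L) : Prop :=
  Mono e ∧ ∀ ⦃P : C⦄ (h : L ⟶ P), Mono (e ≫ h) → Mono h

/-- A superfluous epimorphism: an epi `t` such that any `h` with `h ≫ t` epi is epi. -/
def SuperfluousEpi {P Q : C} (t : P ⟶ Q) : Prop :=
  Epi t ∧ ∀ ⦃X : C⦄ (h : X ⟶ P), Epi (h ≫ t) → Epi h

/-- A fully invariant morphism into `M`: every endomorphism of `M` restricts along it. -/
def FullyInvariant {L M : C} (s : L ⟶ M) : Prop :=
  ∀ h : M ⟶ M, ∃ α : L ⟶ L, s ≫ h = α ≫ s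

/-- A fully coinvariant morphism out of `N`: every endomorphism of `N` descends along it. -/
def FullyCoinvariant {N P : C} (r : N ⟶ P) : Prop :=
  ∀ h : N ⟶ N, ∃ β : P ⟶ P, h ≫ r = r ≫ β

/-- An object is weak duo if every section into it is fully invariant. -/
def WeakDuo (X : C) : Prop := ∀ ⦃K : C⦄ (s : K ⟶ X), IsSection s → FullyInvariant s

/-- `N` is `M`-CS-Rickart. -/
def CSRickart (M N : C) : Prop :=
  ∀ f : M ⟶ N, ∃ (L : C) (e : kernel f ⟶ L) (s : L ⟶ M),
    EssentialMono e ∧ IsSection s ∧ kernel.ι f = e ≫ s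

/-- `N` is strongly `M`-CS-Rickart. -/
def StronglyCSRickart (M N : C) : Prop :=
  ∀ f : M ⟶ N, ∃ (L : C) (e : kernel f ⟶ L) (s : L ⟶ M),
    EssentialMono e ∧ IsSection s ∧ FullyInvariant s ∧ kernel.ι f = e ≫ s

/-- `N` is dual `M`-CS-Rickart. -/
def DualCSRickart (M N : C) : Prop :=
  ∀ f : M ⟶ N, ∃ (P : C) (r : N ⟶ P) (t : P ⟶ cokernel f),
    IsRetraction r ∧ SuperfluousEpi t ∧ cokernel.π f = r ≫ t

/-- `N` is dual strongly `M`-CS-Rickart. -/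
def DualStronglyCSRickart (M N : C) : Prop :=
  ∀ f : M ⟶ N, ∃ (P : C) (r : N ⟶ P) (t : P ⟶ cokernel f),
    IsRetraction r ∧ FullyCoinvariant r ∧ SuperfluousEpi t ∧ cokernel.π f = r ≫ t

/-- `N` is strongly `M`-Rickart. -/
def StronglyRickart (M N : C) : Prop :=
  ∀ f : M ⟶ N, IsSection (kernel.ι f) ∧ FullyInvariant (kernel.ι f)

/-- `N` is dual strongly `M`-Rickart. -/
def DualStronglyRickart (M N : C) : Prop :=
  ∀ f : M ⟶ N, IsRetraction (cokernel.π f) ∧ FullyCoinvariant (cokernel.π f)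

/-- `N` is `M`-𝒦-nonsingular. -/
def KNonsingular (M N : C) : Prop :=
  ∀ f : M ⟶ N, EssentialMono (kernel.ι f) → f = 0

/-- `M` is `N`-𝒯-nonsingular. -/
def TNonsingular (M N : C) : Prop :=
  ∀ f : M ⟶ N, SuperfluousEpi (cokernel.π f) → f = 0

/-- `A` is an essential subobject of `B` (in the subobject lattice of `M`). -/
def EssentialIn {M : C} (A B : Subobject M) : Prop :=
  A ≤ B ∧ ∀ X : Subobject M, X ≤ B → X ⊓ A = ⊥ → X = ⊥

/-- A subobject is a direct summand if its inclusion splits. -/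
def SubDirectSummand {M : C} (U : Subobject M) : Prop := IsSection U.arrow

/-- A subobject is fully invariant if its inclusion monomorphism is fully invariant. -/
def SubFullyInvariant {M : C} (U : Subobject M) : Prop := FullyInvariant U.arrow

/-- `M` is strictly SIP-extending. -/
def StrictlySIPExtending (M : C) : Prop :=
  ∀ A B : Subobject M,
    (∃ U, SubDirectSummand U ∧ EssentialIn A U) →
    (∃ V, SubDirectSummand V ∧ EssentialIn B V) →
    ∃ W, SubDirectSummand W ∧ SubFullyInvariant W ∧ EssentialIn (A ⊓ B) W

/-- `M` is strictly SSIP-extending: for any family of subobjects, each essential in a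
direct summand, any greatest lower bound of the family is essential in a fully invariant
direct summand. -/
def StrictlySSIPExtending (M : C) : Prop :=
  ∀ ⦃ι : Type w⦄ (A : ι → Subobject M) (K : Subobject M), IsGLB (Set.range A) K →
    (∀ i, ∃ U, SubDirectSummand U ∧ EssentialIn (A i) U) →
    ∃ W, SubDirectSummand W ∧ SubFullyInvariant W ∧ EssentialIn K W

/-- An object is indecomposable: nonzero, and any biproduct decomposition is trivial. -/
def IndecomposableObj (M : C) : Prop :=
  ¬ IsZero M ∧ ∀ (A B : C), Nonempty (M ≅ A ⊞ B) → IsZero A ∨ IsZero B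

lemma superfluous_coker_comp {M P N : C} (g' : M ⟶ P) (sr : P ⟶ N)
    (hsup : SuperfluousEpi (cokernel.π g')) :
    SuperfluousEpi (cokernel.π (g' ≫ sr)) := by
  obtain ⟨-, hsup⟩ := hsup
  refine ⟨inferInstance, fun X h hh => ?_⟩
  set g := g' ≫ sr with hg
  set c := cokernel.π g with hc
  have hdesc : biprod.desc h g = biprod.fst ≫ h + biprod.snd ≫ g := by
    apply biprod.hom_ext' <;> simp
  -- η := biprod.desc h g is epi
  haveI hη : Epi (biprod.desc h g) := by
    apply Preadditive.epi_of_cancel_zero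
    intro Z w hw
    have h1 : h ≫ w = 0 := by
      have := biprod.inl ≫= hw
      simpa using this
    have h2 : g ≫ w = 0 := by
      have := biprod.inr ≫= hw
      simpa using this
    have hcw : c ≫ cokernel.desc g w h2 = w := cokernel.π_desc _ _ _
    have hw' : cokernel.desc g w h2 = 0 := by
      haveI := hh
      apply (cancel_epi (h ≫ c)).1
      rw [Category.assoc, hcw, h1, comp_zero]
    rw [← hcw, hw', comp_zero]
  -- pullback of η along sr
  haveI hq2 : Epi (pullback.snd (biprod.desc h g) sr) := inferInstance
  set q₁ := pullback.fst (biprod.desc h g) sr with hq₁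
  set q₂ := pullback.snd (biprod.desc h g) sr with hq₂d
  set y₁ : pullback (biprod.desc h g) sr ⟶ X := q₁ ≫ biprod.fst with hy₁
  set y₂ : pullback (biprod.desc h g) sr ⟶ P := q₂ - q₁ ≫ biprod.snd ≫ g' with hy₂
  have hcomm : y₁ ≫ h = y₂ ≫ sr := by
    have hcond : q₁ ≫ (biprod.fst ≫ h + biprod.snd ≫ g) = q₂ ≫ sr := by
      rw [← hdesc]; exact pullback.condition
    simp only [Preadditive.comp_add, Category.assoc] at hcond
    have h3 : (q₁ ≫ biprod.snd ≫ g') ≫ sr = q₁ ≫ biprod.snd ≫ g := by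
      simp only [Category.assoc, hg]
    rw [hy₁, hy₂, Preadditive.sub_comp, Category.assoc, ← hcond, h3]
    abel
  set L := pullback.lift y₁ y₂ hcomm with hL
  have hLb : L ≫ pullback.snd h sr = y₂ := pullback.lift_snd _ _ _
  have hbt : Epi (pullback.snd h sr ≫ cokernel.π g') := by
    have heq : L ≫ pullback.snd h sr ≫ cokernel.π g' = q₂ ≫ cokernel.π g' := by
      rw [← Category.assoc, hLb, hy₂, Preadditive.sub_comp]
      simp [cokernel.condition]
    have : Epi (q₂ ≫ cokernel.π g') := epi_comp _ _
    rw [← heq] at this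
    exact epi_of_epi L _
  haveI hb : Epi (pullback.snd h sr) := hsup _ hbt
  -- conclude h is epi
  apply Preadditive.epi_of_cancel_zero
  intro Z w hw
  have hsrw : sr ≫ w = 0 := by
    apply (cancel_epi (pullback.snd h sr)).1
    rw [← Category.assoc, ← pullback.condition, Category.assoc, hw, comp_zero, comp_zero]
  have hgw : g ≫ w = 0 := by
    rw [hg, Category.assoc, hsrw, comp_zero]
  have hcw : c ≫ cokernel.desc g w hgw = w := cokernel.π_desc _ _ _
  have hw' : cokernel.desc g w hgw = 0 := by
    haveI := hh
    apply (cancel_epi (h ≫ c)).1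
    rw [Category.assoc, hcw, hw, comp_zero]
  rw [← hcw, hw', comp_zero]

theorem stmt7 (M N : C) :
    (DualStronglyCSRickart M N ∧ TNonsingular M N) ↔ DualStronglyRickart M N := by
  constructor
  · rintro ⟨hcs, hns⟩ f
    obtain ⟨P, r, t, ⟨sr, hsr⟩, hfc, ⟨ht_epi, ht_sup⟩, hπ⟩ := hcs f
    -- r is epi
    haveI hrepi : Epi r := by
      constructor
      intro X u v huv
      have := congrArg (fun x => sr ≫ x) huv
      simpa [hsr, reassoc_of% hsr] using this
    -- t is isomorphic to cokernel.π (f ≫ r)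
    have hcond : (f ≫ r) ≫ t = 0 := by
      rw [Category.assoc, ← hπ, cokernel.condition]
    set v : cokernel (f ≫ r) ⟶ cokernel f := cokernel.desc (f ≫ r) t hcond with hv
    have hπv : cokernel.π (f ≫ r) ≫ v = t := cokernel.π_desc _ _ _
    have hcond2 : f ≫ (r ≫ cokernel.π (f ≫ r)) = 0 := by
      rw [← Category.assoc, cokernel.condition]
    set u : cokernel f ⟶ cokernel (f ≫ r) := cokernel.desc f (r ≫ cokernel.π (f ≫ r)) hcond2 with hu
    have hπu : cokernel.π f ≫ u = r ≫ cokernel.π (f ≫ r) := cokernel.π_desc _ _ _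
    have htu : t ≫ u = cokernel.π (f ≫ r) := by
      have : r ≫ t ≫ u = r ≫ cokernel.π (f ≫ r) := by
        rw [← Category.assoc, ← hπ, hπu]
      exact (cancel_epi r).1 this
    have hvu : v ≫ u = 𝟙 _ := by
      rw [← cancel_epi (cokernel.π (f ≫ r)), ← Category.assoc, hπv, htu,
        Category.comp_id]
    have huv2 : u ≫ v = 𝟙 _ := by
      rw [← cancel_epi (cokernel.π f), ← Category.assoc, hπu, Category.assoc, hπv, ← hπ,
        Category.comp_id]
    haveI hviso : IsIso v := ⟨u, hvu, huv2⟩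
    -- cokernel.π (f ≫ r) is a superfluous epi
    have hsup : SuperfluousEpi (cokernel.π (f ≫ r)) := by
      refine ⟨inferInstance, fun X h hh => ?_⟩
      apply ht_sup
      have : h ≫ t = (h ≫ cokernel.π (f ≫ r)) ≫ v := by
        rw [Category.assoc, hπv]
      rw [this]
      haveI := hh
      exact epi_comp _ _
    have hsup2 := superfluous_coker_comp (f ≫ r) sr hsup
    have hg0 : (f ≫ r) ≫ sr = 0 := hns _ hsup2
    have hfr0 : f ≫ r = 0 := by
      have : ((f ≫ r) ≫ sr) ≫ r = f ≫ r := by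
        rw [Category.assoc, hsr, Category.comp_id]
      rw [← this, hg0, zero_comp]
    -- w : cokernel f ⟶ P with π ≫ w = r
    set w : cokernel f ⟶ P := cokernel.desc f r hfr0 with hw
    have hπw : cokernel.π f ≫ w = r := cokernel.π_desc _ _ _
    have hwt : w ≫ t = 𝟙 _ := by
      rw [← cancel_epi (cokernel.π f), ← Category.assoc, hπw, ← hπ, Category.comp_id]
    haveI hwepi : Epi w := by
      apply ht_sup
      rw [hwt]
      infer_instance
    have htw : t ≫ w = 𝟙 P := by
      rw [← cancel_epi w, ← Category.assoc, hwt, Category.id_comp, Category.comp_id]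
    constructor
    · exact ⟨w ≫ sr, by
        rw [hπ, Category.assoc, ← Category.assoc sr, hsr, Category.id_comp, hwt]⟩
    · intro h
      obtain ⟨β, hβ⟩ := hfc h
      refine ⟨w ≫ β ≫ t, ?_⟩
      rw [hπ, ← Category.assoc, hβ, Category.assoc, Category.assoc, ← Category.assoc t,
        htw, Category.id_comp]
  · intro hdr
    constructor
    · intro f
      obtain ⟨hret, hfc⟩ := hdr f
      exact ⟨cokernel f, cokernel.π f, 𝟙 _, hret, hfc,
        ⟨inferInstance, fun X h hh => by simpa using hh⟩, (Category.comp_id _).symm⟩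
    · intro f ⟨hepi, hsup⟩
      obtain ⟨⟨s, hs⟩, _⟩ := hdr f
      haveI hsepi : Epi s := hsup s (by rw [hs]; infer_instance)
      have hπs : cokernel.π f ≫ s = 𝟙 _ := by
        rw [← cancel_epi s, ← Category.assoc, hs, Category.id_comp, Category.comp_id]
      have : f ≫ cokernel.π f ≫ s = 0 ≫ cokernel.π f ≫ s := by
        rw [← Category.assoc, cokernel.condition, zero_comp, zero_comp]
      rw [hπs, Category.comp_id, zero_comp] at this
      exact this
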